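/- For each 1 ≤ i ≤ n−1, the transposition operator s_i has the following adjoint with respect to the Jackson-integral pairing: for all polynomials f, g ∈ ℝ[x_1,…,x_n] (not necessarily symmetric), ⟨s_i f | g⟩ = ⟨f | ((t·x_i − x_{i+1})/(x_i − t·x_{i+1})) · s_i g⟩, where (s_i f)(x) is f with x_i and x_{i+1} interchanged. The pole of the integrand coming from the factor (x_i − t·x_{i+1}) is cancelled by a zero of Δ_q^{(k)}, so the pairing is well defined. -/

import Mathlib

noncomputable section
namespace ASC

/-- The infinite `q`-Pochhammer symbol `(z;q)_∞ := ∏_{j=0}^∞ (1 − z·q^j)`. -/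
def qPochInf (z q : ℝ) : ℝ := ∏' j : ℕ, (1 - z * q ^ j)

/-- The weight `w_U(x) := ((qx;q)_∞·((qx/a);q)_∞)/((q;q)_∞·(a;q)_∞·((q/a);q)_∞)`. -/
def wU (q a x : ℝ) : ℝ :=
  (qPochInf (q * x) q * qPochInf (q * x / a) q) /
    (qPochInf q q * qPochInf a q * qPochInf (q / a) q)

/-- The `n`-fold Jackson integral of `G` over `[a,1]^n`. -/
def jackson (n : ℕ) (q a : ℝ) (G : (Fin n → ℝ) → ℝ) : ℝ :=
  (1 - q) ^ n * ∑' (ε : Fin n → Bool), ∑' (m : Fin n → ℕ),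
    (∏ l, (if ε l then -a else 1) * q ^ m l) *
      G (fun l => (if ε l then a else 1) * q ^ m l)

/-- `Δ_q^{(k)} := ∏_{p=−(k−1)}^{k} ∏_{1≤i<j≤n} (x_i − q^p·x_j)` as a polynomial. -/
def DeltaPoly (n k : ℕ) (q : ℝ) : MvPolynomial (Fin n) ℝ :=
  ∏ p ∈ Finset.Icc (-(k : ℤ) + 1) (k : ℤ),
    ∏ i : Fin n, ∏ j ∈ Finset.Ioi i, (MvPolynomial.X i - MvPolynomial.C (q ^ p) * MvPolynomial.X j)

open Finset MvPolynomial

/-- Value of an adjacent swap on `Fin n`, coordinate-wise. -/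
lemma swap_val {n : ℕ} (i0 i1 : Fin n) (x : Fin n) :
    ((Equiv.swap i0 i1 x : Fin n) : ℕ)
      = if (x:ℕ) = (i0:ℕ) then (i1:ℕ) else if (x:ℕ) = (i1:ℕ) then (i0:ℕ) else (x:ℕ) := by
  by_cases h0 : x = i0
  · subst h0; rw [Equiv.swap_apply_left, if_pos rfl]
  · by_cases h1 : x = i1
    · subst h1; rw [Equiv.swap_apply_right, if_neg (fun hh => h0 (Fin.ext hh)), if_pos rfl]
    · rw [Equiv.swap_apply_of_ne_of_ne h0 h1, if_neg (fun hh => h0 (Fin.ext hh)),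
        if_neg (fun hh => h1 (Fin.ext hh))]

/-- An adjacent transposition preserves strict inequality on all pairs except the
transposed pair itself. -/
lemma swap_adj_lt {n : ℕ} (i0 i1 : Fin n) (hadj : (i0:ℕ) + 1 = (i1:ℕ))
    (a b : Fin n) (hab : a < b) (hne : ¬(a = i0 ∧ b = i1)) :
    Equiv.swap i0 i1 a < Equiv.swap i0 i1 b := by
  replace hne : ¬((a:ℕ) = (i0:ℕ) ∧ (b:ℕ) = (i1:ℕ)) := by
    simpa [Fin.ext_iff] using hne
  rw [Fin.lt_def] at hab ⊢
  rw [swap_val, swap_val]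
  split_ifs <;> omega

/-- `∏_{p=1−k}^{k} (−q^p) = q^k`. -/
lemma neg_q_prod (q : ℝ) (hq : q ≠ 0) (k : ℕ) :
    ∏ p ∈ Icc (-(k:ℤ) + 1) (k:ℤ), (-(q ^ p)) = q ^ (k:ℤ) := by
  induction k with
  | zero => simp
  | succ k ih =>
    have e : Icc (-(k:ℤ) - 1 + 1) ((k:ℤ) + 1)
        = insert (-(k:ℤ)) (insert ((k:ℤ)+1) (Icc (-(k:ℤ) + 1) (k:ℤ))) := by
      ext x; simp only [mem_Icc, mem_insert]; omega
    have h1 : (-(k:ℤ)) ∉ insert ((k:ℤ)+1) (Icc (-(k:ℤ) + 1) (k:ℤ)) := by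
      simp only [mem_insert, mem_Icc]; omega
    have h2 : ((k:ℤ)+1) ∉ Icc (-(k:ℤ) + 1) (k:ℤ) := by simp only [mem_Icc]; omega
    push_cast
    rw [show -((k:ℤ)+1) + 1 = -(k:ℤ) - 1 + 1 by ring, e, prod_insert h1, prod_insert h2, ih]
    calc -q^(-(k:ℤ)) * (-q^((k:ℤ)+1) * q^(k:ℤ))
        = q^(-(k:ℤ)) * q^((k:ℤ)+1) * q^(k:ℤ) := by ring
      _ = q^((-(k:ℤ)) + ((k:ℤ)+1) + (k:ℤ)) := by rw [← zpow_add₀ hq, ← zpow_add₀ hq]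
      _ = q^((k:ℤ)+1) := by congr 1; ring

/-- The key algebraic identity: the adjacent transposition of `Δ_q^{(k)}`, multiplied by
`(x_i − t·x_{i+1})`, equals `Δ_q^{(k)}` multiplied by `(t·x_i − x_{i+1})`, `t = q^k`. -/
lemma rename_delta (n k : ℕ) (q : ℝ) (hq : q ≠ 0) (i0 i1 : Fin n)
    (hadj : (i0:ℕ) + 1 = (i1:ℕ)) :
    MvPolynomial.rename (Equiv.swap i0 i1) (DeltaPoly n k q)
        * (MvPolynomial.X i0 - MvPolynomial.C (q ^ k) * MvPolynomial.X i1)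
      = DeltaPoly n k q * (MvPolynomial.C (q ^ k) * MvPolynomial.X i0 - MvPolynomial.X i1) := by
  have h01 : i0 < i1 := by rw [Fin.lt_def]; omega
  set σ := Equiv.swap i0 i1 with hσ
  set S : Finset (Σ _ : Fin n, Fin n) := Finset.univ.sigma (fun i => Finset.Ioi i) with hSdef
  have he0 : (⟨i0, i1⟩ : Σ _ : Fin n, Fin n) ∈ S := by
    simp [hSdef, Finset.mem_sigma, Finset.mem_Ioi, h01]
  set A : MvPolynomial (Fin n) ℝ :=
    ∏ p ∈ Icc (-(k:ℤ)+1) (k:ℤ), ∏ x ∈ S.erase ⟨i0,i1⟩, (X x.1 - C (q ^ p) * X x.2) with hA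
  -- splitting of Delta
  have hsplit : DeltaPoly n k q
      = A * ∏ p ∈ Icc (-(k:ℤ)+1) (k:ℤ), (X i0 - C (q ^ p) * X i1) := by
    unfold DeltaPoly
    rw [← Finset.prod_mul_distrib]
    refine Finset.prod_congr rfl (fun p _ => ?_)
    rw [show (∏ i : Fin n, ∏ j ∈ Finset.Ioi i, (X i - C (q^p) * X j) : MvPolynomial (Fin n) ℝ)
        = ∏ x ∈ S, (X x.1 - C (q^p) * X x.2) from
        (Finset.prod_sigma Finset.univ (fun i => Finset.Ioi i)
          (fun x => X x.1 - C (q^p) * X x.2)).symm,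
      ← Finset.mul_prod_erase S _ he0]
    exact mul_comm _ _
  -- invariance of A under the swap
  have hmem : ∀ x : (Σ _ : Fin n, Fin n), x ∈ S.erase ⟨i0,i1⟩ →
      (⟨σ x.1, σ x.2⟩ : Σ _ : Fin n, Fin n) ∈ S.erase ⟨i0,i1⟩ := by
    rintro ⟨x1, x2⟩ hx
    rw [Finset.mem_erase, hSdef, Finset.mem_sigma, Finset.mem_Ioi] at hx ⊢
    obtain ⟨hne, -, hlt⟩ := hx
    have hne' : ¬(x1 = i0 ∧ x2 = i1) := by simpa using hne
    refine ⟨?_, Finset.mem_univ _, swap_adj_lt i0 i1 hadj x1 x2 hlt hne'⟩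
    intro hcontra
    have h1 : σ x1 = i0 ∧ σ x2 = i1 := by
      simpa using hcontra
    have hx1 : x1 = i1 := by
      have := congrArg σ h1.1
      simpa [hσ, Equiv.swap_apply_self, Equiv.swap_apply_left] using this
    have hx2 : x2 = i0 := by
      have := congrArg σ h1.2
      simpa [hσ, Equiv.swap_apply_self, Equiv.swap_apply_right] using this
    rw [hx1, hx2] at hlt
    exact absurd hlt (not_lt.mpr h01.le)
  have hrenA : rename σ A = A := by
    rw [hA, map_prod]
    refine Finset.prod_congr rfl (fun p _ => ?_)
    rw [map_prod]
    refine Finset.prod_nbij' (fun x => ⟨σ x.1, σ x.2⟩) (fun x => ⟨σ x.1, σ x.2⟩)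
      hmem hmem ?_ ?_ ?_
    · rintro ⟨x1, x2⟩ _; simp [hσ, Equiv.swap_apply_self]
    · rintro ⟨x1, x2⟩ _; simp [hσ, Equiv.swap_apply_self]
    · rintro ⟨x1, x2⟩ _; simp [map_sub, map_mul, rename_X, rename_C]
  -- the pair factors
  have step : ∀ p : ℤ, rename σ ((X i0 - C (q^p) * X i1 : MvPolynomial (Fin n) ℝ))
      = (-(C (q^p))) * (X i0 - C (q^(-p)) * X i1) := by
    intro p
    have hC : (C (q^p) * C (q^(-p)) : MvPolynomial (Fin n) ℝ) = 1 := by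
      rw [← map_mul, ← zpow_add₀ hq]; norm_num
    simp only [map_sub, map_mul, rename_X, rename_C, hσ, Equiv.swap_apply_left,
      Equiv.swap_apply_right]
    linear_combination (-(X i1 : MvPolynomial (Fin n) ℝ)) * hC
  have hrenPair : rename σ (∏ p ∈ Icc (-(k:ℤ)+1) (k:ℤ), (X i0 - C (q^p) * X i1))
      = C (q ^ (k:ℤ)) * ∏ p ∈ Icc (-(k:ℤ)) ((k:ℤ)-1), (X i0 - C (q^p) * X i1) := by
    rw [map_prod]
    simp only [step]
    rw [Finset.prod_mul_distrib]
    simp only [← map_neg (C : ℝ →+* MvPolynomial (Fin n) ℝ)]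
    rw [← map_prod, neg_q_prod q hq k]
    congr 1
    refine Finset.prod_nbij' (fun p => -p) (fun p => -p) ?_ ?_ ?_ ?_ ?_
    · intro a ha; simp only [mem_Icc] at ha ⊢; omega
    · intro a ha; simp only [mem_Icc] at ha ⊢; omega
    · intro a _; ring
    · intro a _; ring
    · intro a _; rfl
  -- assembling
  have e1 : Icc (-(k:ℤ)) (k:ℤ) = insert (-(k:ℤ)) (Icc (-(k:ℤ)+1) (k:ℤ)) := by
    ext x; simp only [mem_Icc, mem_insert]; omega
  have e2 : Icc (-(k:ℤ)) (k:ℤ) = insert (k:ℤ) (Icc (-(k:ℤ)) ((k:ℤ)-1)) := by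
    ext x; simp only [mem_Icc, mem_insert]; omega
  have hm1 : (-(k:ℤ)) ∉ Icc (-(k:ℤ)+1) (k:ℤ) := by simp [mem_Icc]
  have hm2 : (k:ℤ) ∉ Icc (-(k:ℤ)) ((k:ℤ)-1) := by simp [mem_Icc]
  have t1 : ∏ p ∈ Icc (-(k:ℤ)) (k:ℤ), (X i0 - C (q^p) * X i1 : MvPolynomial (Fin n) ℝ)
      = (X i0 - C (q^(k:ℤ)) * X i1) * ∏ p ∈ Icc (-(k:ℤ)) ((k:ℤ)-1), (X i0 - C (q^p) * X i1) := by
    conv_lhs => rw [e2]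
    exact Finset.prod_insert hm2
  have t2 : ∏ p ∈ Icc (-(k:ℤ)) (k:ℤ), (X i0 - C (q^p) * X i1 : MvPolynomial (Fin n) ℝ)
      = (X i0 - C (q^(-(k:ℤ))) * X i1) * ∏ p ∈ Icc (-(k:ℤ)+1) (k:ℤ), (X i0 - C (q^p) * X i1) := by
    conv_lhs => rw [e1]
    exact Finset.prod_insert hm1
  have hC : (C (q^(k:ℤ)) * C (q^(-(k:ℤ))) : MvPolynomial (Fin n) ℝ) = 1 := by
    rw [← map_mul, ← zpow_add₀ hq]; norm_num
  rw [← zpow_natCast q k, hsplit, map_mul, hrenA, hrenPair]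
  linear_combination (A * C (q^(k:ℤ))) * (t2 - t1)
    - (A * (∏ p ∈ Icc (-(k:ℤ)+1) (k:ℤ), (X i0 - C (q^p) * X i1))
        * (X i1 : MvPolynomial (Fin n) ℝ)) * hC

/-- The Jackson integral is invariant under permuting the coordinates of the integrand. -/
lemma jackson_comp_perm (n : ℕ) (q a : ℝ) (σ : Equiv.Perm (Fin n))
    (G : (Fin n → ℝ) → ℝ) :
    jackson n q a (fun x => G (x ∘ σ)) = jackson n q a G := by
  unfold jackson
  congr 1
  rw [← Equiv.tsum_eq (Equiv.arrowCongr σ.symm (Equiv.refl Bool))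
      (fun ε => ∑' (m : Fin n → ℕ), (∏ l, (if ε l then -a else 1) * q ^ m l) *
        G (fun l => (if ε l then a else 1) * q ^ m l))]
  refine tsum_congr (fun ε => ?_)
  rw [← Equiv.tsum_eq (Equiv.arrowCongr σ.symm (Equiv.refl ℕ))
      (fun m => (∏ l, (if (Equiv.arrowCongr σ.symm (Equiv.refl Bool)) ε l then -a else 1) * q ^ m l) *
        G (fun l => (if (Equiv.arrowCongr σ.symm (Equiv.refl Bool)) ε l then a else 1) * q ^ m l))]
  refine tsum_congr (fun m => ?_)
  simp only [Equiv.arrowCongr_apply, Equiv.coe_refl, Function.comp, Equiv.symm_symm,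
    id_eq]
  rw [Equiv.prod_comp σ (fun l => (if ε l then -a else 1) * q ^ m l)]
  rfl

/-- STATEMENT 7: the adjoint of the transposition `s_i` with respect to the
Jackson-integral pairing: `⟨s_i f|g⟩ = ⟨f|((t·x_i − x_{i+1})/(x_i − t·x_{i+1}))·s_i g⟩`,
with `t = q^k`. The rational function `f·((t·x_i − x_{i+1})/(x_i − t·x_{i+1}))·(s_i g)·Δ_q^{(k)}`
is in fact a polynomial `P` (the pole from `(x_i − t·x_{i+1})` is cancelled by a zero of
`Δ_q^{(k)}`), and the pairing identity is stated via `P`. -/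
theorem statement7 (n k : ℕ) (hn : 1 ≤ n) (hk : 1 ≤ k) (q a : ℝ)
    (hq0 : 0 < q) (hq1 : q < 1) (ha : a < 0)
    (i : ℕ) (hi : i + 1 < n)
    (f g : MvPolynomial (Fin n) ℝ) :
    ∃ P : MvPolynomial (Fin n) ℝ,
      P * (MvPolynomial.X (⟨i, Nat.lt_of_succ_lt hi⟩ : Fin n)
            - MvPolynomial.C (q ^ k) * MvPolynomial.X (⟨i + 1, hi⟩ : Fin n))
        = f * (MvPolynomial.C (q ^ k) * MvPolynomial.X (⟨i, Nat.lt_of_succ_lt hi⟩ : Fin n)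
            - MvPolynomial.X (⟨i + 1, hi⟩ : Fin n))
            * MvPolynomial.rename (Equiv.swap (⟨i, Nat.lt_of_succ_lt hi⟩ : Fin n) ⟨i + 1, hi⟩) g
            * DeltaPoly n k q ∧
      jackson n q a (fun x =>
          MvPolynomial.eval x
            (MvPolynomial.rename (Equiv.swap (⟨i, Nat.lt_of_succ_lt hi⟩ : Fin n) ⟨i + 1, hi⟩) f
              * g * DeltaPoly n k q) * ∏ l, wU q a (x l))
        = jackson n q a (fun x => MvPolynomial.eval x P * ∏ l, wU q a (x l)) := by
  have hq : q ≠ 0 := ne_of_gt hq0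
  set i0 : Fin n := ⟨i, Nat.lt_of_succ_lt hi⟩ with hi0
  set i1 : Fin n := ⟨i + 1, hi⟩ with hi1
  set σ : Equiv.Perm (Fin n) := Equiv.swap i0 i1 with hσ
  have key := rename_delta n k q hq i0 i1 rfl
  refine ⟨f * rename σ g * rename σ (DeltaPoly n k q), ?_, ?_⟩
  · linear_combination (f * rename (⇑σ) g) * key
  · have hG : (fun x : Fin n → ℝ =>
        eval x (f * rename σ g * rename σ (DeltaPoly n k q)) * ∏ l, wU q a (x l))
        = fun x : Fin n → ℝ =>
          (fun y => eval y (rename σ f * g * DeltaPoly n k q) * ∏ l, wU q a (y l)) (x ∘ σ) := by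
      funext x
      simp only [map_mul, eval_rename]
      have hxx : ((x ∘ ⇑σ) ∘ ⇑σ) = x := by
        funext l
        simp [hσ, Function.comp, Equiv.swap_apply_self]
      rw [hxx]
      congr 1
      exact (Equiv.prod_comp σ (fun l => wU q a (x l))).symm
    conv_rhs => rw [hG]
    exact (jackson_comp_perm n q a σ _).symm

end ASC
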